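/- arXiv:1804.05264 — 2 statements merged into one kernel-verified Lean document; each statement's English description precedes it below -/
import Mathlib

section
/- Let V be a realization of M, W a normal matrix for V, and S = Vᵀ * W the corresponding slack matrix. Let φ : R →ₐ[k] MvPolynomial (Fin n ⊕ Fin h) k be the k-algebra homomorphism determined by sending the variable x_(i,j) to (S i j) • (X (Sum.inl i) * X (Sum.inr j)). Then the cycle ideal C_S equals the kernel of φ; in particular C_S is a prime (toric) ideal. -/
open Classical Matrix MvPolynomial

/-- `V` is a realization of the matroid `M`: a set `I` is independent in `M` iff the
columns of `V` indexed by `I` are linearly independent over `k`. -/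
def IsRealization {k : Type*} [Field k] {n d : ℕ} (M : Matroid (Fin n))
    (V : Matrix (Fin (d + 1)) (Fin n) k) : Prop :=
  ∀ I : Set (Fin n), M.Indep I ↔ LinearIndependent k (fun i : I => Vᵀ (i : Fin n))

/-- `F` is a hyperplane of `M`: a flat of `M` of rank `d`. -/
def IsHyperplane {n : ℕ} (M : Matroid (Fin n)) (d : ℕ) (F : Set (Fin n)) : Prop :=
  M.IsFlat F ∧ ∃ I, M.IsBasis I F ∧ I.ncard = d

/-- `H` is a bijection onto the set of hyperplanes of `M`. -/
def HypEnum {n h : ℕ} (M : Matroid (Fin n)) (d : ℕ) (H : Fin h → Set (Fin n)) : Prop :=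
  Function.Injective H ∧ ∀ F : Set (Fin n), (∃ j, H j = F) ↔ IsHyperplane M d F

/-- `M` has rank `r` : some base of `M` has cardinality `r`. -/
def HasRank {n : ℕ} (M : Matroid (Fin n)) (r : ℕ) : Prop :=
  ∃ B, M.IsBase B ∧ B.ncard = r

/-- `W` is a normal matrix for the realization `V`: the dot product of column `j` of `W`
with column `i` of `V` is zero iff `i ∈ H j`. -/
def IsNormalMatrix {k : Type*} [Field k] {n d h : ℕ} (H : Fin h → Set (Fin n))
    (V : Matrix (Fin (d + 1)) (Fin n) k) (W : Matrix (Fin (d + 1)) (Fin h) k) : Prop :=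
  ∀ i j, (∑ r : Fin (d + 1), W r j * V r i) = 0 ↔ i ∈ H j

/-- Projective equivalence of realizations. -/
def ProjEquiv {k : Type*} [Field k] {n d : ℕ}
    (V V' : Matrix (Fin (d + 1)) (Fin n) k) : Prop :=
  ∃ (A : Matrix (Fin (d + 1)) (Fin (d + 1)) k) (b : Fin n → kˣ),
    IsUnit A ∧ V' = A * V * Matrix.diagonal (fun i => (b i : k))

/-- The index type of slack variables: pairs `(i, j)` with `i ∉ H j`. -/
abbrev SlackVar {n h : ℕ} (H : Fin h → Set (Fin n)) : Type :=
  {p : Fin n × Fin h // p.1 ∉ H p.2}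

/-- The symbolic slack matrix of `M`. -/
noncomputable def symbSlack {n h : ℕ} (H : Fin h → Set (Fin n)) (k : Type*) [Field k] :
    Matrix (Fin n) (Fin h) (MvPolynomial (SlackVar H) k) :=
  fun i j => if hij : i ∈ H j then 0 else X ⟨(i, j), hij⟩

/-- The ideal `J` generated by the `(d+2)`-minors of the symbolic slack matrix. -/
noncomputable def minorIdeal {n h : ℕ} (d : ℕ) (H : Fin h → Set (Fin n)) (k : Type*)
    [Field k] : Ideal (MvPolynomial (SlackVar H) k) :=
  Ideal.span { f | ∃ (r : Fin (d + 2) → Fin n) (c : Fin (d + 2) → Fin h),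
    Function.Injective r ∧ Function.Injective c ∧
      f = ((symbSlack H k).submatrix r c).det }

/-- The product `P` of all slack variables. -/
noncomputable def allVarsProd {n h : ℕ} (H : Fin h → Set (Fin n)) (k : Type*) [Field k] :
    MvPolynomial (SlackVar H) k :=
  ∏ e : SlackVar H, X e

/-- The slack ideal `I_M` : the saturation of `J` at `P`, as a set. -/
noncomputable def slackSet {n h : ℕ} (d : ℕ) (H : Fin h → Set (Fin n)) (k : Type*) [Field k] :
    Set (MvPolynomial (SlackVar H) k) :=
  {f | ∃ N : ℕ, allVarsProd H k ^ N * f ∈ minorIdeal d H k}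

/-- The matrix `S(s)` obtained by evaluating the symbolic slack matrix at `s`. -/
noncomputable def slackEval {k : Type*} [Field k] {n h : ℕ} (H : Fin h → Set (Fin n))
    (s : SlackVar H → k) : Matrix (Fin n) (Fin h) k :=
  fun i j => if hij : i ∈ H j then 0 else s ⟨(i, j), hij⟩

/-- Cyclic successor in `Fin m`. -/
def cycSucc {m : ℕ} (i : Fin m) : Fin m := ⟨(i.val + 1) % m, Nat.mod_lt _ i.pos⟩

/-- The cycle ideal `C_S` of a slack matrix `S`. -/
noncomputable def cycleIdeal {k : Type*} [Field k] {n h : ℕ} (H : Fin h → Set (Fin n))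
    (S : Matrix (Fin n) (Fin h) k) : Ideal (MvPolynomial (SlackVar H) k) :=
  Ideal.span { f | ∃ (m : ℕ) (_ : 2 ≤ m) (a : Fin m → Fin n) (b : Fin m → Fin h)
    (_ : Function.Injective a) (_ : Function.Injective b)
    (h1 : ∀ i, a i ∉ H (b i)) (h2 : ∀ i, a (cycSucc i) ∉ H (b i)),
    f = C (∏ i, S (a (cycSucc i)) (b i)) * ∏ i, X ⟨(a i, b i), h1 i⟩
      - C (∏ i, S (a i) (b i)) * ∏ i, X ⟨(a (cycSucc i), b i), h2 i⟩ }




section Aux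

variable {k : Type*} [Field k] {n h : ℕ} {H : Fin h → Set (Fin n)}

/-- Bipartite degree vector of an exponent vector. -/
noncomputable def Adeg (H : Fin h → Set (Fin n)) (u : SlackVar H →₀ ℕ) :
    (Fin n ⊕ Fin h) →₀ ℕ :=
  u.sum fun e c => c • (Finsupp.single (Sum.inl e.1.1) 1 + Finsupp.single (Sum.inr e.1.2) 1)

lemma Adeg_add (u v : SlackVar H →₀ ℕ) : Adeg H (u + v) = Adeg H u + Adeg H v := by
  classical
  unfold Adeg
  exact Finsupp.sum_add_index (by simp) (by intro e _ c d; rw [add_smul])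

@[simp] lemma Adeg_zero : Adeg H 0 = 0 := by simp [Adeg]

@[simp] lemma Adeg_single (e : SlackVar H) (c : ℕ) :
    Adeg H (Finsupp.single e c)
      = c • (Finsupp.single (Sum.inl e.1.1) 1 + Finsupp.single (Sum.inr e.1.2) 1) := by
  unfold Adeg
  exact Finsupp.sum_single_index (by simp)

lemma Adeg_finsetSum {ι : Type*} (s : Finset ι) (d : ι → (SlackVar H →₀ ℕ)) :
    Adeg H (∑ i ∈ s, d i) = ∑ i ∈ s, Adeg H (d i) := by
  classical
  induction s using Finset.induction with
  | empty => simp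
  | @insert a s' hx ih => rw [Finset.sum_insert hx, Adeg_add, ih, Finset.sum_insert hx]

lemma Adeg_apply_inl (u : SlackVar H →₀ ℕ) (i : Fin n) :
    Adeg H u (Sum.inl i) = ∑ e : SlackVar H, if e.1.1 = i then u e else 0 := by
  classical
  rw [Adeg, Finsupp.sum_apply]
  rw [Finsupp.sum]
  rw [Finset.sum_subset (Finset.subset_univ u.support)]
  · apply Finset.sum_congr rfl
    intro e _
    simp only [Finsupp.coe_smul, Pi.smul_apply, Finsupp.coe_add, Pi.add_apply,
      Finsupp.single_apply, smul_eq_mul]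
    by_cases he : e.1.1 = i <;> simp [he]
  · intro e _ he
    simp only [Finsupp.notMem_support_iff] at he
    simp [he]

lemma Adeg_apply_inr (u : SlackVar H →₀ ℕ) (j : Fin h) :
    Adeg H u (Sum.inr j) = ∑ e : SlackVar H, if e.1.2 = j then u e else 0 := by
  classical
  rw [Adeg, Finsupp.sum_apply]
  rw [Finsupp.sum]
  rw [Finset.sum_subset (Finset.subset_univ u.support)]
  · apply Finset.sum_congr rfl
    intro e _
    simp only [Finsupp.coe_smul, Pi.smul_apply, Finsupp.coe_add, Pi.add_apply,
      Finsupp.single_apply, smul_eq_mul]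
    by_cases he : e.1.2 = j <;> simp [he]
  · intro e _ he
    simp only [Finsupp.notMem_support_iff] at he
    simp [he]

lemma Adeg_eq_zero {u : SlackVar H →₀ ℕ} (hu : Adeg H u = 0) : u = 0 := by
  classical
  ext e
  have h1 := Adeg_apply_inl u e.1.1
  rw [hu] at h1
  have h2 : ∀ f : SlackVar H, f ∈ Finset.univ → (0:ℕ) ≤ if f.1.1 = e.1.1 then u f else 0 := by
    intro f _; positivity
  have := (Finset.sum_eq_zero_iff_of_nonneg h2).mp h1.symm e (Finset.mem_univ e)
  simpa using this

/-- Multiplicative weight of an exponent vector. -/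
noncomputable def cwt (S : Matrix (Fin n) (Fin h) k) (u : SlackVar H →₀ ℕ) : k :=
  ∏ e : SlackVar H, (S e.1.1 e.1.2) ^ u e

lemma cwt_add (S : Matrix (Fin n) (Fin h) k) (u v : SlackVar H →₀ ℕ) :
    cwt S (u + v) = cwt S u * cwt S v := by
  rw [cwt, cwt, cwt, ← Finset.prod_mul_distrib]
  exact Finset.prod_congr rfl fun e _ => by simp [pow_add]

@[simp] lemma cwt_zero (S : Matrix (Fin n) (Fin h) k) : cwt (H := H) S 0 = 1 := by simp [cwt]

@[simp] lemma cwt_single_one (S : Matrix (Fin n) (Fin h) k) (e : SlackVar H) :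
    cwt S (Finsupp.single e 1) = S e.1.1 e.1.2 := by
  classical
  rw [cwt]
  rw [Finset.prod_eq_single e]
  · simp
  · intro f _ hf; rw [Finsupp.single_apply_eq_zero.mpr (by simp [hf]), pow_zero]
  · simp

lemma cwt_finsetSum {ι : Type*} (S : Matrix (Fin n) (Fin h) k) (s : Finset ι)
    (d : ι → (SlackVar H →₀ ℕ)) :
    cwt S (∑ i ∈ s, d i) = ∏ i ∈ s, cwt S (d i) := by
  classical
  induction s using Finset.induction with
  | empty => simp
  | @insert a s' hx ih => rw [Finset.sum_insert hx, cwt_add, ih, Finset.prod_insert hx]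

lemma cwt_ne_zero (S : Matrix (Fin n) (Fin h) k)
    (hS : ∀ i j, i ∉ H j → S i j ≠ 0) (u : SlackVar H →₀ ℕ) : cwt S u ≠ 0 := by
  rw [cwt]
  exact Finset.prod_ne_zero_iff.mpr fun e _ => pow_ne_zero _ (hS e.1.1 e.1.2 e.2)

lemma prod_monomial {σ : Type*} {ι : Type*} (s : Finset ι) (d : ι → (σ →₀ ℕ)) (c : ι → k) :
    (∏ i ∈ s, monomial (d i) (c i)) = monomial (∑ i ∈ s, d i) (∏ i ∈ s, c i) := by
  classical
  induction s using Finset.induction with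
  | empty => simp
  | @insert a s' hx ih =>
      rw [Finset.prod_insert hx, ih, monomial_mul, Finset.sum_insert hx, Finset.prod_insert hx]

lemma aeval_slack_monomial (S : Matrix (Fin n) (Fin h) k) (u : SlackVar H →₀ ℕ) (a : k) :
    aeval (fun e : SlackVar H =>
        (S e.1.1 e.1.2) • (X (Sum.inl e.1.1) * X (Sum.inr e.1.2) : MvPolynomial (Fin n ⊕ Fin h) k))
      (monomial u a) = monomial (Adeg H u) (a * cwt S u) := by
  classical
  rw [aeval_monomial]
  have hf : ∀ e : SlackVar H,
      (S e.1.1 e.1.2) • (X (Sum.inl e.1.1) * X (Sum.inr e.1.2) : MvPolynomial (Fin n ⊕ Fin h) k)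
        = monomial (Finsupp.single (Sum.inl e.1.1) 1 + Finsupp.single (Sum.inr e.1.2) 1)
            (S e.1.1 e.1.2) := by
    intro e
    rw [smul_eq_C_mul, X, X, monomial_mul, C_mul_monomial]
    simp
  have : (u.prod fun e c =>
      ((S e.1.1 e.1.2) • (X (Sum.inl e.1.1) * X (Sum.inr e.1.2) : MvPolynomial (Fin n ⊕ Fin h) k)) ^ c)
      = monomial (Adeg H u) (cwt S u) := by
    rw [Finsupp.prod_fintype _ _ (fun e => pow_zero _)]
    have : ∀ e : SlackVar H,
        ((S e.1.1 e.1.2) • (X (Sum.inl e.1.1) * X (Sum.inr e.1.2) : MvPolynomial (Fin n ⊕ Fin h) k)) ^ u e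
        = monomial (u e • (Finsupp.single (Sum.inl e.1.1) 1 + Finsupp.single (Sum.inr e.1.2) 1))
            ((S e.1.1 e.1.2) ^ u e) := by
      intro e; rw [hf e, monomial_pow]
    rw [Finset.prod_congr rfl fun e _ => this e, prod_monomial]
    congr 1
    rw [Adeg, Finsupp.sum_fintype _ _ (fun e => by simp)]
  rw [this, algebraMap_eq, C_mul_monomial]

end Aux



section Walk

variable {n h : ℕ}

lemma walk_shrink (Pu Pv : Fin n → Fin h → Prop)
    (hdisj : ∀ i j, Pu i j → ¬ Pv i j) :
    ∀ m, 1 ≤ m → ∀ a : Fin m → Fin n, ∀ b : Fin m → Fin h,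
      (∀ q, Pu (a q) (b q)) → (∀ q, Pv (a (cycSucc q)) (b q)) →
      ∃ m', 2 ≤ m' ∧ ∃ a' : Fin m' → Fin n, ∃ b' : Fin m' → Fin h,
        Function.Injective a' ∧ Function.Injective b' ∧
        (∀ q, Pu (a' q) (b' q)) ∧ (∀ q, Pv (a' (cycSucc q)) (b' q)) := by
  intro m
  induction m using Nat.strong_induction_on with
  | _ m ih =>
  intro hm a b hu hv
  have hmpos : 0 < m := hm
  -- Nat-indexed versions
  set A : ℕ → Fin n := fun q => a ⟨q % m, Nat.mod_lt _ hmpos⟩ with hA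
  set B : ℕ → Fin h := fun q => b ⟨q % m, Nat.mod_lt _ hmpos⟩ with hB
  have hcyc : ∀ q : ℕ, cycSucc (⟨q % m, Nat.mod_lt _ hmpos⟩ : Fin m)
      = ⟨(q + 1) % m, Nat.mod_lt _ hmpos⟩ := by
    intro q; apply Fin.ext; simp [cycSucc, Nat.mod_add_mod]
  have PU : ∀ q : ℕ, Pu (A q) (B q) := fun q => hu _
  have PV : ∀ q : ℕ, Pv (A (q + 1)) (B q) := by
    intro q
    have := hv (⟨q % m, Nat.mod_lt _ hmpos⟩ : Fin m)
    rwa [hcyc q] at this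
  have hAa : ∀ q : Fin m, A q.val = a q := fun q =>
    congrArg a (Fin.ext (Nat.mod_eq_of_lt q.isLt))
  have hBb : ∀ q : Fin m, B q.val = b q := fun q =>
    congrArg b (Fin.ext (Nat.mod_eq_of_lt q.isLt))
  rcases Nat.lt_or_ge m 2 with hm2 | hm2
  · -- m = 1 : contradiction
    have hm1 : m = 1 := by omega
    have hq : ∀ q : Fin m, cycSucc q = q := by
      intro q
      apply Fin.ext
      have h1 : q.val = 0 := by omega
      simp [cycSucc, hm1, h1]
    have h2 := hv ⟨0, hmpos⟩
    rw [hq] at h2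
    exact absurd h2 (hdisj _ _ (hu ⟨0, hmpos⟩))
  by_cases hinj : Function.Injective a ∧ Function.Injective b
  · exact ⟨m, hm2, a, b, hinj.1, hinj.2, hu, hv⟩
  have hrep : ∃ k₁ k₂ : Fin m, k₁.val < k₂.val ∧ (a k₁ = a k₂ ∨ b k₁ = b k₂) := by
    rcases not_and_or.mp hinj with hna | hnb
    · rw [Function.not_injective_iff] at hna
      obtain ⟨x, y, hxy, hne⟩ := hna
      rcases Nat.lt_or_ge x.val y.val with hlt | hge
      · exact ⟨x, y, hlt, Or.inl hxy⟩
      · exact ⟨y, x, lt_of_le_of_ne hge (fun hc => hne (Fin.ext hc.symm)), Or.inl hxy.symm⟩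
    · rw [Function.not_injective_iff] at hnb
      obtain ⟨x, y, hxy, hne⟩ := hnb
      rcases Nat.lt_or_ge x.val y.val with hlt | hge
      · exact ⟨x, y, hlt, Or.inr hxy⟩
      · exact ⟨y, x, lt_of_le_of_ne hge (fun hc => hne (Fin.ext hc.symm)), Or.inr hxy.symm⟩
  obtain ⟨k₁, k₂, hklt, hcase⟩ := hrep
  set p : ℕ := k₂.val - k₁.val with hp
  have hp1 : 1 ≤ p := by omega
  have hk₂ : k₂.val < m := k₂.isLt
  have hplt : p < m := by omega
  have hppos : 0 < p := hp1
  rcases hcase with hab | hab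
  · -- a k₁ = a k₂ : sub-walk a' t = A (k₁ + t), b' t = B (k₁ + t)
    refine ih p hplt hp1 (fun t => A (k₁.val + t.val)) (fun t => B (k₁.val + t.val))
      (fun t => PU _) ?_
    intro t
    show Pv (A (k₁.val + (cycSucc t).val)) (B (k₁.val + t.val))
    rcases Nat.lt_or_ge (t.val + 1) p with ht | ht
    · have hc : (cycSucc t).val = t.val + 1 := by simp [cycSucc, Nat.mod_eq_of_lt ht]
      rw [hc, show k₁.val + (t.val + 1) = (k₁.val + t.val) + 1 by omega]
      exact PV _
    · have htp : t.val = p - 1 := by have := t.isLt; omega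
      have hc : (cycSucc t).val = 0 := by simp [cycSucc, htp, Nat.sub_add_cancel hp1]
      rw [hc, Nat.add_zero]
      have hAk : A k₁.val = A (k₂.val - 1 + 1) := by
        rw [show k₂.val - 1 + 1 = k₂.val by omega, hAa k₁, hAa k₂]; exact hab
      rw [show k₁.val + t.val = k₂.val - 1 by omega, hAk]
      exact PV _
  · -- b k₁ = b k₂ : sub-walk a' t = A (k₁ + 1 + t), b' t = B (k₁ + 1 + t)
    refine ih p hplt hp1 (fun t => A (k₁.val + 1 + t.val)) (fun t => B (k₁.val + 1 + t.val))
      (fun t => PU _) ?_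
    intro t
    show Pv (A (k₁.val + 1 + (cycSucc t).val)) (B (k₁.val + 1 + t.val))
    rcases Nat.lt_or_ge (t.val + 1) p with ht | ht
    · have hc : (cycSucc t).val = t.val + 1 := by simp [cycSucc, Nat.mod_eq_of_lt ht]
      rw [hc, show k₁.val + 1 + (t.val + 1) = (k₁.val + 1 + t.val) + 1 by omega]
      exact PV _
    · have htp : t.val = p - 1 := by have := t.isLt; omega
      have hc : (cycSucc t).val = 0 := by simp [cycSucc, htp, Nat.sub_add_cancel hp1]
      rw [hc, Nat.add_zero]
      -- goal : Pv (A (k₁+1)) (B (k₁+1+t)) ; note k₁+1+t = k₂ and B k₂ = B k₁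
      have hBk : B (k₁.val + 1 + t.val) = B k₁.val := by
        rw [show k₁.val + 1 + t.val = k₂.val by omega, hBb k₁, hBb k₂]; exact hab.symm
      rw [hBk]
      exact PV _

end Walk

section WalkExists

variable {k : Type*} [Field k] {n h : ℕ} {H : Fin h → Set (Fin n)}

lemma exists_slack (u : SlackVar H →₀ ℕ) {e : SlackVar H} {i : Fin n} {j : Fin h}
    (hne : u e ≠ 0) (h1 : e.1.1 = i) (h2 : e.1.2 = j) :
    ∃ hij : i ∉ H j, u ⟨(i, j), hij⟩ ≠ 0 := by
  subst h1
  subst h2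
  refine ⟨e.2, ?_⟩
  have he : (⟨(e.1.1, e.1.2), e.2⟩ : SlackVar H) = e := Subtype.ext (by simp)
  rwa [he]

set_option maxHeartbeats 1000000 in
/-- From two exponent vectors with the same bipartite degrees, extract an alternating
closed walk in the supports. -/
lemma walk_exists (u v : SlackVar H →₀ ℕ) (hne : u ≠ 0)
    (hdeg : Adeg H u = Adeg H v) :
    ∃ m, 1 ≤ m ∧ ∃ a : Fin m → Fin n, ∃ b : Fin m → Fin h,
      (∀ q, ∃ hij : a q ∉ H (b q), u ⟨(a q, b q), hij⟩ ≠ 0) ∧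
      (∀ q, ∃ hij : a (cycSucc q) ∉ H (b q), v ⟨(a (cycSucc q), b q), hij⟩ ≠ 0) := by
  classical
  -- degree equalities
  have hrow : ∀ i : Fin n, (∑ e : SlackVar H, if e.1.1 = i then u e else 0)
      = ∑ e : SlackVar H, if e.1.1 = i then v e else 0 := by
    intro i; rw [← Adeg_apply_inl, ← Adeg_apply_inl, hdeg]
  have hcol : ∀ j : Fin h, (∑ e : SlackVar H, if e.1.2 = j then u e else 0)
      = ∑ e : SlackVar H, if e.1.2 = j then v e else 0 := by
    intro j; rw [← Adeg_apply_inr, ← Adeg_apply_inr, hdeg]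
  obtain ⟨e₀, he₀⟩ : ∃ e, u e ≠ 0 := by
    by_contra hc
    push_neg at hc
    exact hne (Finsupp.ext fun e => hc e)
  -- positivity transfer lemmas
  have colpos_u : ∀ e : SlackVar H, u e ≠ 0 →
      0 < ∑ f : SlackVar H, if f.1.2 = e.1.2 then u f else 0 := by
    intro e he
    refine Finset.sum_pos' (fun f _ => by positivity) ⟨e, Finset.mem_univ e, ?_⟩
    simp [Nat.pos_of_ne_zero he]
  have rowpos_v : ∀ e : SlackVar H, v e ≠ 0 →
      0 < ∑ f : SlackVar H, if f.1.1 = e.1.1 then v f else 0 := by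
    intro e he
    refine Finset.sum_pos' (fun f _ => by positivity) ⟨e, Finset.mem_univ e, ?_⟩
    simp [Nat.pos_of_ne_zero he]
  have exrow_u : ∀ i : Fin n, 0 < (∑ e : SlackVar H, if e.1.1 = i then u e else 0) →
      ∃ e, u e ≠ 0 ∧ e.1.1 = i := by
    intro i hpos
    obtain ⟨e, _, hne'⟩ := Finset.exists_ne_zero_of_sum_ne_zero (Nat.pos_iff_ne_zero.mp hpos)
    by_cases hcase : e.1.1 = i
    · refine ⟨e, ?_, hcase⟩; simpa [hcase] using hne'
    · simp [hcase] at hne'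
  have excol_v : ∀ j : Fin h, 0 < (∑ e : SlackVar H, if e.1.2 = j then v e else 0) →
      ∃ e, v e ≠ 0 ∧ e.1.2 = j := by
    intro j hpos
    obtain ⟨e, _, hne'⟩ := Finset.exists_ne_zero_of_sum_ne_zero (Nat.pos_iff_ne_zero.mp hpos)
    by_cases hcase : e.1.2 = j
    · refine ⟨e, ?_, hcase⟩; simpa [hcase] using hne'
    · simp [hcase] at hne'
  -- choice functions
  obtain ⟨eRow, eRow_spec⟩ : ∃ f : Fin n → SlackVar H,
      ∀ i, (∃ e, u e ≠ 0 ∧ e.1.1 = i) → u (f i) ≠ 0 ∧ (f i).1.1 = i := by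
    refine ⟨fun i => if hp : ∃ e, u e ≠ 0 ∧ e.1.1 = i then hp.choose else e₀, ?_⟩
    intro i hi
    simp only [dif_pos hi]
    exact hi.choose_spec
  obtain ⟨eCol, eCol_spec⟩ : ∃ f : Fin h → SlackVar H,
      ∀ j, (∃ e, v e ≠ 0 ∧ e.1.2 = j) → v (f j) ≠ 0 ∧ (f j).1.2 = j := by
    refine ⟨fun j => if hp : ∃ e, v e ≠ 0 ∧ e.1.2 = j then hp.choose else e₀, ?_⟩
    intro j hj
    simp only [dif_pos hj]
    exact hj.choose_spec
  set next : Fin n → Fin n := fun i => (eCol (eRow i).1.2).1.1 with hnext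
  have colQ : ∀ i, (∃ e, u e ≠ 0 ∧ e.1.1 = i) → ∃ e, v e ≠ 0 ∧ e.1.2 = (eRow i).1.2 := by
    intro i hi
    have h1 := eRow_spec i hi
    have h2 : 0 < ∑ f : SlackVar H, if f.1.2 = (eRow i).1.2 then v f else 0 := by
      rw [← hcol]
      exact colpos_u _ h1.1
    exact excol_v _ h2
  have Qnext : ∀ i, (∃ e, u e ≠ 0 ∧ e.1.1 = i) →
      (∃ e, u e ≠ 0 ∧ e.1.1 = next i) := by
    intro i hi
    have h2 := eCol_spec _ (colQ i hi)
    have h3 : 0 < ∑ f : SlackVar H, if f.1.1 = (eCol (eRow i).1.2).1.1 then u f else 0 := by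
      rw [hrow]
      exact rowpos_v _ h2.1
    exact exrow_u _ h3
  have Qiter : ∀ q : ℕ, ∃ e, u e ≠ 0 ∧ e.1.1 = next^[q] e₀.1.1 := by
    intro q
    induction q with
    | zero => exact ⟨e₀, he₀, rfl⟩
    | succ q ihq =>
        rw [Function.iterate_succ_apply']
        exact Qnext _ ihq
  -- pigeonhole
  obtain ⟨x, y, hxy, hfeq⟩ := Fintype.exists_ne_map_eq_of_card_lt
    (fun q : Fin (n + 1) => next^[q.val] e₀.1.1) (by simp)
  have hwlog : ∃ s t : ℕ, s < t ∧ next^[s] e₀.1.1 = next^[t] e₀.1.1 := by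
    rcases Nat.lt_or_ge x.val y.val with hlt | hge
    · exact ⟨x.val, y.val, hlt, hfeq⟩
    · exact ⟨y.val, x.val, lt_of_le_of_ne hge (fun hc => hxy (Fin.ext hc.symm)), hfeq.symm⟩
  obtain ⟨s, t, hst, hper⟩ := hwlog
  set m : ℕ := t - s with hm
  have hm1 : 1 ≤ m := by omega
  refine ⟨m, hm1, fun q => next^[s + q.val] e₀.1.1,
    fun q => (eRow (next^[s + q.val] e₀.1.1)).1.2, ?_, ?_⟩
  · intro q
    have hQi : ∃ e, u e ≠ 0 ∧ e.1.1 = next^[s + q.val] e₀.1.1 := Qiter _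
    have hspec := eRow_spec _ hQi
    exact exists_slack u hspec.1 hspec.2 rfl
  · intro q
    have hQi : ∃ e, u e ≠ 0 ∧ e.1.1 = next^[s + q.val] e₀.1.1 := Qiter _
    have h2 := eCol_spec _ (colQ _ hQi)
    have hstep : next^[s + (cycSucc q).val] e₀.1.1 = next (next^[s + q.val] e₀.1.1) := by
      rcases Nat.lt_or_ge (q.val + 1) m with hlt | hge
      · have hc : (cycSucc q).val = q.val + 1 := by simp [cycSucc, Nat.mod_eq_of_lt hlt]
        rw [hc, show s + (q.val + 1) = (s + q.val) + 1 by omega,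
          Function.iterate_succ_apply']
      · have htq : q.val = m - 1 := by have := q.isLt; omega
        have hc : (cycSucc q).val = 0 := by simp [cycSucc, htq, Nat.sub_add_cancel hm1]
        rw [hc, Nat.add_zero, hper, show t = (s + q.val) + 1 by omega,
          Function.iterate_succ_apply']
    refine exists_slack v h2.1 ?_ h2.2
    show (eCol ((eRow (next^[s + q.val] e₀.1.1)).1.2)).1.1 = next^[s + (cycSucc q).val] e₀.1.1
    rw [hstep]

end WalkExists

section Binomial

variable {k : Type*} [Field k] {n h : ℕ} {H : Fin h → Set (Fin n)}

lemma cycSucc_bijective {m : ℕ} : Function.Bijective (cycSucc : Fin m → Fin m) := by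
  rw [Fintype.bijective_iff_injective_and_card]
  refine ⟨?_, rfl⟩
  intro x y hxy
  have hx := x.isLt
  have hy := y.isLt
  have hval : (x.val + 1) % m = (y.val + 1) % m := by
    simpa [cycSucc, Fin.ext_iff] using hxy
  have e1 : (x.val + 1) % m = x.val + 1 ∨ ((x.val + 1) % m = 0 ∧ x.val + 1 = m) := by
    rcases Nat.lt_or_ge (x.val + 1) m with hc | hc
    · exact Or.inl (Nat.mod_eq_of_lt hc)
    · have hxm : x.val + 1 = m := by omega
      exact Or.inr ⟨by rw [hxm, Nat.mod_self], hxm⟩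
  have e2 : (y.val + 1) % m = y.val + 1 ∨ ((y.val + 1) % m = 0 ∧ y.val + 1 = m) := by
    rcases Nat.lt_or_ge (y.val + 1) m with hc | hc
    · exact Or.inl (Nat.mod_eq_of_lt hc)
    · have hym : y.val + 1 = m := by omega
      exact Or.inr ⟨by rw [hym, Nat.mod_self], hym⟩
  apply Fin.ext
  rcases e1 with h1 | ⟨h1, h1'⟩ <;> rcases e2 with h2 | ⟨h2, h2'⟩ <;> rw [h1, h2] at hval <;> omega

lemma X_eq_monomial {σ : Type*} (e : σ) : (X e : MvPolynomial σ k) = monomial (Finsupp.single e 1) 1 := rfl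

lemma sum_single_apply_eq {m : ℕ} (f : Fin m → SlackVar H) (hf : Function.Injective f)
    (e : SlackVar H) :
    (∑ q : Fin m, Finsupp.single (f q) 1) e = if ∃ q, f q = e then 1 else 0 := by
  classical
  rw [Finsupp.finset_sum_apply]
  by_cases hq : ∃ q, f q = e
  · obtain ⟨q₀, hq₀⟩ := hq
    rw [Finset.sum_congr rfl (g := fun q => if q = q₀ then 1 else 0) ?_]
    · rw [if_pos ⟨q₀, hq₀⟩, Finset.sum_ite_eq' Finset.univ q₀ (fun _ => 1)]
      simp
    · intro q _
      rw [Finsupp.single_apply]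
      subst hq₀
      by_cases hqq : q = q₀
      · simp [hqq]
      · have hne : ¬ f q = f q₀ := fun hc => hqq (hf hc)
        simp [hqq, hne]
  · rw [if_neg hq]
    refine Finset.sum_eq_zero fun q _ => ?_
    rw [Finsupp.single_apply, if_neg (fun hc => hq ⟨q, hc⟩)]

lemma binomial_mem (S : Matrix (Fin n) (Fin h) k) (hS : ∀ i j, i ∉ H j → S i j ≠ 0) :
    ∀ N : ℕ, ∀ u v : SlackVar H →₀ ℕ, ∀ μ : k, (∑ e : SlackVar H, u e) ≤ N →
      Adeg H u = Adeg H v → cwt S u = μ * cwt S v →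
      (monomial u (1 : k) - C μ * monomial v 1) ∈ cycleIdeal H S := by
  classical
  intro N
  induction N with
  | zero =>
      intro u v μ hN hdeg hc
      have hu0 : u = 0 := by
        ext e
        have : ∀ f ∈ Finset.univ, u f = 0 :=
          (Finset.sum_eq_zero_iff).mp (Nat.le_zero.mp hN)
        exact this e (Finset.mem_univ e)
      subst hu0
      have hv0 : v = 0 := Adeg_eq_zero (H := H) (by rw [← hdeg, Adeg_zero])
      subst hv0
      have hμ : μ = 1 := by simpa using hc.symm
      subst hμ
      rw [C_1, one_mul, sub_self]
      exact Ideal.zero_mem _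
  | succ N ihN =>
      intro u v μ hN hdeg hc
      by_cases hu0 : u = 0
      · subst hu0
        have hv0 : v = 0 := Adeg_eq_zero (H := H) (by rw [← hdeg, Adeg_zero])
        subst hv0
        have hμ : μ = 1 := by simpa using hc.symm
        subst hμ
        rw [C_1, one_mul, sub_self]
        exact Ideal.zero_mem _
      by_cases hcom : ∃ e, u e ≠ 0 ∧ v e ≠ 0
      · -- common variable : factor it out
        obtain ⟨e, hue, hve⟩ := hcom
        have hle_u : Finsupp.single e 1 ≤ u := Finsupp.single_le_iff.mpr (by omega)
        have hle_v : Finsupp.single e 1 ≤ v := Finsupp.single_le_iff.mpr (by omega)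
        set u' := u - Finsupp.single e 1 with hu'
        set v' := v - Finsupp.single e 1 with hv'
        have hu'' : Finsupp.single e 1 + u' = u := add_tsub_cancel_of_le hle_u
        have hv'' : Finsupp.single e 1 + v' = v := add_tsub_cancel_of_le hle_v
        have hdeg' : Adeg H u' = Adeg H v' := by
          have h1 : Adeg H (Finsupp.single e 1) + Adeg H u'
              = Adeg H (Finsupp.single e 1) + Adeg H v' := by
            rw [← Adeg_add, ← Adeg_add, hu'', hv'', hdeg]
          ext x
          have := congrArg (fun f => f x) h1
          simp only [Finsupp.coe_add, Pi.add_apply] at this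
          omega
        have hc' : cwt S u' = μ * cwt S v' := by
          have h1 : cwt S (Finsupp.single e 1) * cwt S u'
              = μ * (cwt S (Finsupp.single e 1) * cwt S v') := by
            rw [← cwt_add, ← cwt_add, hu'', hv'', hc]
          rw [cwt_single_one] at h1
          have hSe : S e.1.1 e.1.2 ≠ 0 := hS _ _ e.2
          apply mul_left_cancel₀ hSe
          rw [h1]
          ring
        have hN' : (∑ f : SlackVar H, u' f) ≤ N := by
          have h1 : (∑ f : SlackVar H, u f)
              = (∑ f : SlackVar H, (Finsupp.single e 1) f) + ∑ f : SlackVar H, u' f := by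
            rw [← Finset.sum_add_distrib]
            refine Finset.sum_congr rfl fun f _ => ?_
            conv_lhs => rw [← hu'']
            simp
          have h2 : (∑ f : SlackVar H, (Finsupp.single e 1 : SlackVar H →₀ ℕ) f) = 1 := by
            rw [Finset.sum_congr rfl (fun f _ => Finsupp.single_apply)]
            simp
          omega
        have hmem := ihN u' v' μ hN' hdeg' hc'
        have hkey : monomial u (1 : k) - C μ * monomial v 1
            = X e * (monomial u' 1 - C μ * monomial v' 1) := by
          rw [mul_sub]
          congr 1
          · rw [X_eq_monomial, monomial_mul, one_mul, hu'']
          · rw [mul_left_comm, X_eq_monomial, monomial_mul, one_mul, hv'']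
        rw [hkey]
        exact Ideal.mul_mem_left _ _ hmem
      · -- disjoint supports : extract a cycle
        push_neg at hcom
        obtain ⟨m₀, hm₀, a₀, b₀, hu₀, hv₀⟩ := walk_exists u v hu0 hdeg
        obtain ⟨m', hm2, a, b, inja, injb, hPu, hPv⟩ := walk_shrink
          (fun i j => ∃ hij : i ∉ H j, u ⟨(i, j), hij⟩ ≠ 0)
          (fun i j => ∃ hij : i ∉ H j, v ⟨(i, j), hij⟩ ≠ 0)
          (fun i j hu hv => hv.2 (hcom _ hu.2)) m₀ hm₀ a₀ b₀ hu₀ hv₀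
        set edgeU : Fin m' → SlackVar H := fun q => ⟨(a q, b q), (hPu q).choose⟩ with hedgeU
        set edgeV : Fin m' → SlackVar H := fun q => ⟨(a (cycSucc q), b q), (hPv q).choose⟩
          with hedgeV
        have huE : ∀ q, u (edgeU q) ≠ 0 := fun q => (hPu q).choose_spec
        have hvE : ∀ q, v (edgeV q) ≠ 0 := fun q => (hPv q).choose_spec
        have injU : Function.Injective edgeU := by
          intro q r hqr
          exact inja (congrArg (fun z => z.1.1) hqr)
        have injV : Function.Injective edgeV := by
          intro q r hqr
          exact injb (congrArg (fun z => z.1.2) hqr)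
        set cu : SlackVar H →₀ ℕ := ∑ q : Fin m', Finsupp.single (edgeU q) 1 with hcu
        set cv : SlackVar H →₀ ℕ := ∑ q : Fin m', Finsupp.single (edgeV q) 1 with hcv
        have hcu_le : cu ≤ u := by
          rw [Finsupp.le_def]
          intro f
          rw [hcu, sum_single_apply_eq edgeU injU]
          by_cases hq : ∃ q, edgeU q = f
          · obtain ⟨q, hq'⟩ := hq
            rw [if_pos ⟨q, hq'⟩]
            have := huE q
            rw [hq'] at this
            omega
          · rw [if_neg hq]
            omega
        have hcv_le : cv ≤ v := by
          rw [Finsupp.le_def]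
          intro f
          rw [hcv, sum_single_apply_eq edgeV injV]
          by_cases hq : ∃ q, edgeV q = f
          · obtain ⟨q, hq'⟩ := hq
            rw [if_pos ⟨q, hq'⟩]
            have := hvE q
            rw [hq'] at this
            omega
          · rw [if_neg hq]
            omega
        set u' := u - cu with hu'
        set v' := v - cv with hv'
        have hu'' : u' + cu = u := tsub_add_cancel_of_le hcu_le
        have hv'' : cv + v' = v := add_tsub_cancel_of_le hcv_le
        -- Adeg cu = Adeg cv
        have hAcc : Adeg H cu = Adeg H cv := by
          rw [hcu, hcv, Adeg_finsetSum, Adeg_finsetSum]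
          have h1 : ∀ q : Fin m', Adeg H (Finsupp.single (edgeU q) 1)
              = Finsupp.single (Sum.inl (a q)) 1 + Finsupp.single (Sum.inr (b q)) 1 := by
            intro q
            rw [Adeg_single]
            simp [hedgeU]
          have h2 : ∀ q : Fin m', Adeg H (Finsupp.single (edgeV q) 1)
              = Finsupp.single (Sum.inl (a (cycSucc q))) 1 + Finsupp.single (Sum.inr (b q)) 1 := by
            intro q
            rw [Adeg_single]
            simp [hedgeV]
          rw [Finset.sum_congr rfl fun q _ => h1 q, Finset.sum_congr rfl fun q _ => h2 q]
          rw [Finset.sum_add_distrib, Finset.sum_add_distrib]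
          congr 1
          exact (Function.Bijective.sum_comp cycSucc_bijective
            fun z => Finsupp.single (Sum.inl (a z)) 1).symm
        have hdeg' : Adeg H u' = Adeg H v' := by
          have h1 : Adeg H u' + Adeg H cu = Adeg H v' + Adeg H cu := by
            rw [← Adeg_add, hu'', hdeg, ← hv'', Adeg_add, ← hAcc]
            exact add_comm _ _
          ext x
          have := congrArg (fun f => f x) h1
          simp only [Finsupp.coe_add, Pi.add_apply] at this
          omega
        -- weights
        set α : k := ∏ q : Fin m', S (a (cycSucc q)) (b q) with hα'
        set β : k := ∏ q : Fin m', S (a q) (b q) with hβ'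
        have hαz : α ≠ 0 := by
          rw [hα']
          exact Finset.prod_ne_zero_iff.mpr fun q _ => hS _ _ (hPv q).choose
        have hβz : β ≠ 0 := by
          rw [hβ']
          exact Finset.prod_ne_zero_iff.mpr fun q _ => hS _ _ (hPu q).choose
        have hcwtcu : cwt S cu = β := by
          rw [hcu, cwt_finsetSum, hβ']
          exact Finset.prod_congr rfl fun q _ => by rw [cwt_single_one]
        have hcwtcv : cwt S cv = α := by
          rw [hcv, cwt_finsetSum, hα']
          exact Finset.prod_congr rfl fun q _ => by rw [cwt_single_one]
        set μ' : k := μ * α * β⁻¹ with hμ'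
        have hc' : cwt S u' = μ' * cwt S v' := by
          have h1 : cwt S u' * β = μ * (α * cwt S v') := by
            rw [← hcwtcu, ← cwt_add, hu'', hc, ← hcwtcv, ← cwt_add, hv'']
          rw [hμ']
          field_simp at h1 ⊢
          rw [h1]
        have hN' : (∑ f : SlackVar H, u' f) ≤ N := by
          have h1 : (∑ f : SlackVar H, u f)
              = (∑ f : SlackVar H, u' f) + ∑ f : SlackVar H, cu f := by
            rw [← Finset.sum_add_distrib]
            refine Finset.sum_congr rfl fun f _ => ?_
            conv_lhs => rw [← hu'']
            simp
          have h2 : (∑ f : SlackVar H, cu f) = m' := by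
            calc (∑ f : SlackVar H, cu f)
                = ∑ f : SlackVar H, ∑ q : Fin m', (Finsupp.single (edgeU q) 1) f := by
                  rw [hcu]
                  exact Finset.sum_congr rfl fun f _ => Finsupp.finset_sum_apply _ _ _
              _ = ∑ q : Fin m', ∑ f : SlackVar H, (Finsupp.single (edgeU q) 1) f :=
                  Finset.sum_comm
              _ = ∑ q : Fin m', 1 := Finset.sum_congr rfl fun q _ => by
                  rw [Finset.sum_congr rfl fun f _ => Finsupp.single_apply]
                  simp
              _ = m' := by simp
          omega
        have hT := ihN u' v' μ' hN' hdeg' hc'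
        -- the cycle generator
        have hg : C α * monomial cu (1 : k) - C β * monomial cv 1 ∈ cycleIdeal H S := by
          have hgen : C α * (∏ q : Fin m', (X (edgeU q) : MvPolynomial (SlackVar H) k))
              - C β * ∏ q : Fin m', X (edgeV q) ∈ cycleIdeal H S := by
            refine Ideal.subset_span ⟨m', hm2, a, b, inja, injb,
              fun q => (hPu q).choose, fun q => (hPv q).choose, rfl⟩
          have hpU : (∏ q : Fin m', (X (edgeU q) : MvPolynomial (SlackVar H) k))
              = monomial cu 1 := by
            rw [Finset.prod_congr rfl fun q _ => X_eq_monomial (edgeU q), prod_monomial, hcu]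
            simp
          have hpV : (∏ q : Fin m', (X (edgeV q) : MvPolynomial (SlackVar H) k))
              = monomial cv 1 := by
            rw [Finset.prod_congr rfl fun q _ => X_eq_monomial (edgeV q), prod_monomial, hcv]
            simp
          rwa [hpU, hpV] at hgen
        -- assemble
        have hμ4 : β * α⁻¹ * μ' = μ := by
          rw [hμ']
          field_simp
        have p1 : (C α⁻¹ * monomial u' (1:k)) * (C α * monomial cu 1) = monomial u 1 := by
          rw [mul_mul_mul_comm, ← C_mul, inv_mul_cancel₀ hαz, C_1, one_mul, monomial_mul,
            one_mul, hu'']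
        have p2 : (C α⁻¹ * monomial u' (1:k)) * (C β * monomial cv 1)
            = C (β * α⁻¹) * monomial (u' + cv) 1 := by
          rw [mul_mul_mul_comm, ← C_mul, monomial_mul, one_mul, mul_comm α⁻¹ β]
        have p3 : (C (β * α⁻¹) * monomial cv (1:k)) * monomial u' 1
            = C (β * α⁻¹) * monomial (u' + cv) 1 := by
          rw [mul_assoc, monomial_mul, one_mul, add_comm cv u']
        have p4 : (C (β * α⁻¹) * monomial cv (1:k)) * (C μ' * monomial v' 1)
            = C μ * monomial v 1 := by
          rw [mul_mul_mul_comm, ← C_mul, monomial_mul, one_mul, hv'', hμ4]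
        have key : (C α⁻¹ * monomial u' (1:k)) * (C α * monomial cu 1 - C β * monomial cv 1)
            + (C (β * α⁻¹) * monomial cv 1) * (monomial u' 1 - C μ' * monomial v' 1)
            = monomial u 1 - C μ * monomial v 1 := by
          rw [mul_sub, mul_sub, p1, p2, p3, p4]
          ring
        rw [← key]
        exact Ideal.add_mem _ (Ideal.mul_mem_left _ _ hg) (Ideal.mul_mem_left _ _ hT)

end Binomial

section Final

variable {k : Type*} [Field k] {n h : ℕ} {H : Fin h → Set (Fin n)}

lemma Adeg_cycle_eq {m : ℕ} (a : Fin m → Fin n) (b : Fin m → Fin h)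
    (h1 : ∀ i, a i ∉ H (b i)) (h2 : ∀ i, a (cycSucc i) ∉ H (b i)) :
    Adeg H (∑ q : Fin m, Finsupp.single (⟨(a q, b q), h1 q⟩ : SlackVar H) 1)
      = Adeg H (∑ q : Fin m, Finsupp.single (⟨(a (cycSucc q), b q), h2 q⟩ : SlackVar H) 1) := by
  rw [Adeg_finsetSum, Adeg_finsetSum]
  rw [Finset.sum_congr rfl fun q _ => Adeg_single _ _, Finset.sum_congr rfl fun q _ =>
    Adeg_single (⟨(a (cycSucc q), b q), h2 q⟩ : SlackVar H) 1]
  simp only [one_smul]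
  rw [Finset.sum_add_distrib, Finset.sum_add_distrib]
  congr 1
  exact (Function.Bijective.sum_comp cycSucc_bijective
    fun z => Finsupp.single (Sum.inl (a z)) 1).symm

lemma cycle_le_ker (S : Matrix (Fin n) (Fin h) k) :
    cycleIdeal H S ≤ RingHom.ker (aeval (fun e : SlackVar H =>
      (S e.1.1 e.1.2) • (X (Sum.inl e.1.1) * X (Sum.inr e.1.2)
        : MvPolynomial (Fin n ⊕ Fin h) k)) : MvPolynomial (SlackVar H) k →ₐ[k] _) := by
  classical
  rw [cycleIdeal, Ideal.span_le]
  rintro g ⟨m, hm, a, b, inja, injb, h1, h2, rfl⟩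
  rw [SetLike.mem_coe, RingHom.mem_ker]
  set cu : SlackVar H →₀ ℕ := ∑ q : Fin m, Finsupp.single (⟨(a q, b q), h1 q⟩ : SlackVar H) 1
    with hcu
  set cv : SlackVar H →₀ ℕ :=
    ∑ q : Fin m, Finsupp.single (⟨(a (cycSucc q), b q), h2 q⟩ : SlackVar H) 1 with hcv
  have hpU : (∏ i : Fin m, (X (⟨(a i, b i), h1 i⟩ : SlackVar H)
      : MvPolynomial (SlackVar H) k)) = monomial cu 1 := by
    rw [Finset.prod_congr rfl fun q _ => X_eq_monomial _, prod_monomial, hcu]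
    simp
  have hpV : (∏ i : Fin m, (X (⟨(a (cycSucc i), b i), h2 i⟩ : SlackVar H)
      : MvPolynomial (SlackVar H) k)) = monomial cv 1 := by
    rw [Finset.prod_congr rfl fun q _ => X_eq_monomial _, prod_monomial, hcv]
    simp
  have hcwtU : cwt S cu = ∏ i : Fin m, S (a i) (b i) := by
    rw [hcu, cwt_finsetSum]
    exact Finset.prod_congr rfl fun q _ => by rw [cwt_single_one]
  have hcwtV : cwt S cv = ∏ i : Fin m, S (a (cycSucc i)) (b i) := by
    rw [hcv, cwt_finsetSum]
    exact Finset.prod_congr rfl fun q _ => by rw [cwt_single_one]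
  rw [hpU, hpV, map_sub, _root_.map_mul, _root_.map_mul, aeval_C, aeval_C, algebraMap_eq,
    aeval_slack_monomial, aeval_slack_monomial, one_mul, one_mul,
    Adeg_cycle_eq a b h1 h2, hcwtU, hcwtV, C_mul_monomial, C_mul_monomial, mul_comm]
  exact sub_self _

lemma ker_le_cycle (S : Matrix (Fin n) (Fin h) k) (hS : ∀ i j, i ∉ H j → S i j ≠ 0) :
    RingHom.ker (aeval (fun e : SlackVar H =>
      (S e.1.1 e.1.2) • (X (Sum.inl e.1.1) * X (Sum.inr e.1.2)
        : MvPolynomial (Fin n ⊕ Fin h) k)) : MvPolynomial (SlackVar H) k →ₐ[k] _)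
      ≤ cycleIdeal H S := by
  classical
  intro p hp
  rw [RingHom.mem_ker] at hp
  obtain ⟨rep, rep_spec⟩ : ∃ rep : ((Fin n ⊕ Fin h) →₀ ℕ) → (SlackVar H →₀ ℕ),
      ∀ w, (∃ u, u ∈ p.support ∧ Adeg H u = w) → rep w ∈ p.support ∧ Adeg H (rep w) = w := by
    refine ⟨fun w => if hw : ∃ u, u ∈ p.support ∧ Adeg H u = w then hw.choose else 0, ?_⟩
    intro w hw
    simp only [dif_pos hw]
    exact hw.choose_spec
  -- the grouped coefficient sums vanish
  have hco : ∀ w, (∑ u ∈ p.support.filter (fun u => Adeg H u = w),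
      coeff u p * cwt S u) = 0 := by
    intro w
    have h1 : coeff w (aeval (fun e : SlackVar H =>
        (S e.1.1 e.1.2) • (X (Sum.inl e.1.1) * X (Sum.inr e.1.2)
          : MvPolynomial (Fin n ⊕ Fin h) k)) p)
        = ∑ u ∈ p.support.filter (fun u => Adeg H u = w), coeff u p * cwt S u := by
      conv_lhs => rw [p.as_sum, map_sum]
      rw [Finset.sum_congr rfl (fun u _ => aeval_slack_monomial S u (coeff u p)),
        MvPolynomial.coeff_sum,
        Finset.sum_congr rfl (fun u _ => MvPolynomial.coeff_monomial w (Adeg H u) _),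
        Finset.sum_filter]
    rw [hp] at h1
    simp only [coeff_zero] at h1
    exact h1.symm
  set μu : (SlackVar H →₀ ℕ) → k := fun u => cwt S u * (cwt S (rep (Adeg H u)))⁻¹ with hμu
  set Bu : (SlackVar H →₀ ℕ) → MvPolynomial (SlackVar H) k := fun u =>
    monomial u 1 - C (μu u) * monomial (rep (Adeg H u)) 1 with hBu
  have hBmem : ∀ u ∈ p.support, Bu u ∈ cycleIdeal H S := by
    intro u hu
    have hspec := rep_spec (Adeg H u) ⟨u, hu, rfl⟩
    refine binomial_mem S hS (∑ e : SlackVar H, u e) u (rep (Adeg H u)) (μu u) le_rfl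
      hspec.2.symm ?_
    rw [hμu]
    field_simp [cwt_ne_zero S hS (rep (Adeg H u))]
  -- the correction sum vanishes
  have hT : (∑ u ∈ p.support, monomial (rep (Adeg H u)) (coeff u p * μu u)) = 0 := by
    rw [← Finset.sum_fiberwise_of_maps_to (g := Adeg H) (t := p.support.image (Adeg H))
      (fun u hu => Finset.mem_image_of_mem _ hu)]
    refine Finset.sum_eq_zero fun w _ => ?_
    have hinner : ∀ u ∈ p.support.filter (fun u => Adeg H u = w),
        monomial (rep (Adeg H u)) (coeff u p * μu u)
          = monomial (rep w) (coeff u p * cwt S u * (cwt S (rep w))⁻¹) := by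
      intro u hu
      obtain ⟨hu1, hu2⟩ := Finset.mem_filter.mp hu
      rw [hμu]
      simp only [hu2, mul_assoc]
    rw [Finset.sum_congr rfl hinner, ← map_sum (monomial (rep w)), ← Finset.sum_mul, hco w,
      zero_mul]
    exact monomial_zero
  have hPB : (∑ u ∈ p.support, C (coeff u p) * Bu u) = p := by
    rw [hBu]
    simp only [mul_sub]
    rw [Finset.sum_sub_distrib]
    have e1 : (∑ u ∈ p.support, C (coeff u p) * monomial u (1:k)) = p := by
      rw [Finset.sum_congr rfl fun u _ => C_mul_monomial]
      simp only [mul_one]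
      exact p.as_sum.symm
    have e2 : (∑ u ∈ p.support, C (coeff u p) * (C (μu u) * monomial (rep (Adeg H u)) (1:k)))
        = 0 := by
      rw [Finset.sum_congr rfl (g := fun u => monomial (rep (Adeg H u)) (coeff u p * μu u))
        fun u _ => by rw [← mul_assoc, ← C_mul, C_mul_monomial, mul_one]]
      exact hT
    rw [e1, e2, sub_zero]
  rw [← hPB]
  exact Ideal.sum_mem _ fun u hu => Ideal.mul_mem_left _ _ (hBmem u hu)

end Final

/-- the cycle ideal of a slack matrix is the kernel of the monomial map `φ`,
and in particular it is a prime (toric) ideal. -/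
theorem stmt11 {k : Type*} [Field k] {n d h : ℕ} (M : Matroid (Fin n))
    (hE : M.E = Set.univ) (hrk : HasRank M (d + 1))
    (H : Fin h → Set (Fin n)) (hH : HypEnum M d H)
    (V : Matrix (Fin (d + 1)) (Fin n) k) (hV : IsRealization M V)
    (W : Matrix (Fin (d + 1)) (Fin h) k) (hW : IsNormalMatrix H V W)
    (φ : MvPolynomial (SlackVar H) k →ₐ[k] MvPolynomial (Fin n ⊕ Fin h) k)
    (hφ : φ = MvPolynomial.aeval (fun e : SlackVar H =>
      ((Vᵀ * W) e.1.1 e.1.2) • (X (Sum.inl e.1.1) * X (Sum.inr e.1.2)))) :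
    cycleIdeal H (Vᵀ * W) = RingHom.ker φ ∧ (cycleIdeal H (Vᵀ * W)).IsPrime := by

  subst hφ
  have hS : ∀ i j, i ∉ H j → (Vᵀ * W) i j ≠ 0 := by
    intro i j hij hc
    apply hij
    rw [← hW i j]
    rw [Matrix.mul_apply] at hc
    rw [← hc]
    exact Finset.sum_congr rfl fun r _ => by rw [Matrix.transpose_apply, mul_comm]
  have heq : cycleIdeal H (Vᵀ * W) = RingHom.ker (aeval (fun e : SlackVar H =>
      ((Vᵀ * W) e.1.1 e.1.2) • (X (Sum.inl e.1.1) * X (Sum.inr e.1.2)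
        : MvPolynomial (Fin n ⊕ Fin h) k)) : MvPolynomial (SlackVar H) k →ₐ[k] _) :=
    le_antisymm (cycle_le_ker _) (ker_le_cycle _ hS)
  exact ⟨heq, heq ▸ RingHom.ker_isPrime _⟩
end

section
/- Let S : Matrix (Fin n) (Fin h) k satisfy S i j = 0 ↔ i ∈ H j for all i, j. Let F ⊆ Fin n × Fin h be a set of index pairs with i ∉ H j for every (i, j) ∈ F, and suppose F is acyclic: there is no cycle datum (m, a, b) such that (a k', b k') ∈ F and (a (k'+1), b k') ∈ F for every k' : Fin m. Then there exist units d_r : Fin n → kˣ and d_c : Fin h → kˣ such that (d_r i : k) * S i j * (d_c j : k) = 1 for every (i, j) ∈ F; that is, the rows and columns of S can be scaled so that all entries indexed by a spanning forest of the non-incidence graph equal 1. -/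
open Classical Matrix MvPolynomial

private lemma exists_leaf_edge {n h : ℕ} (F : Set (Fin n × Fin h)) (hne : F.Nonempty)
    (hnc : ¬ ∃ (m : ℕ) (_ : 2 ≤ m) (a : Fin m → Fin n) (b : Fin m → Fin h),
      Function.Injective a ∧ Function.Injective b ∧
      (∀ i, (a i, b i) ∈ F) ∧ (∀ i, (a (cycSucc i), b i) ∈ F)) :
    ∃ p ∈ F, (∀ j', (p.1, j') ∈ F → j' = p.2) ∨ (∀ i', (i', p.2) ∈ F → i' = p.1) := by
  by_contra hcon
  push_neg at hcon
  have hstep : ∀ p : Fin n × Fin h, p ∈ F →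
      ∃ q : Fin n × Fin h, q ∈ F ∧ q.1 ≠ p.1 ∧ q.2 ≠ p.2 ∧ (q.1, p.2) ∈ F := by
    intro p hp
    obtain ⟨⟨j', hj'F, hj'⟩, ⟨i', hi'F, hi'⟩⟩ := hcon p hp
    obtain ⟨⟨j'', hj''F, hj''⟩, -⟩ := hcon (i', p.2) hi'F
    exact ⟨(i', j''), hj''F, hi', hj'', hi'F⟩
  choose f hfF hf1 hf2 hfm using hstep
  obtain ⟨p0, hp0⟩ := hne
  let e : ℕ → {p : Fin n × Fin h // p ∈ F} :=
    fun t => Nat.rec ⟨p0, hp0⟩ (fun _ ep => ⟨f ep.1 ep.2, hfF ep.1 ep.2⟩) t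
  let r : ℕ → Fin n := fun t => (e t).1.1
  let c : ℕ → Fin h := fun t => (e t).1.2
  have hFrc : ∀ t, (r t, c t) ∈ F := fun t => (e t).2
  have hrne : ∀ t, r (t+1) ≠ r t := fun t => hf1 (e t).1 (e t).2
  have hcne : ∀ t, c (t+1) ≠ c t := fun t => hf2 (e t).1 (e t).2
  have hmix : ∀ t, (r (t+1), c t) ∈ F := fun t => hfm (e t).1 (e t).2
  let v : ℕ → Fin n ⊕ Fin h :=
    fun t => if t % 2 = 0 then Sum.inl (r (t/2)) else Sum.inr (c (t/2))
  have hv_even : ∀ t, v (2*t) = Sum.inl (r t) := by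
    intro t
    show (if (2*t) % 2 = 0 then Sum.inl (r ((2*t)/2)) else Sum.inr (c ((2*t)/2))) = Sum.inl (r t)
    rw [if_pos (by omega), show (2*t)/2 = t by omega]
  have hv_odd : ∀ t, v (2*t+1) = Sum.inr (c t) := by
    intro t
    show (if (2*t+1) % 2 = 0 then Sum.inl (r ((2*t+1)/2)) else Sum.inr (c ((2*t+1)/2)))
      = Sum.inr (c t)
    rw [if_neg (by omega), show (2*t+1)/2 = t by omega]
  have hnb : ∀ t, v (t+2) ≠ v t := by
    intro t hvv
    rcases Nat.mod_two_eq_zero_or_one t with h1 | h1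
    · obtain ⟨s, rfl⟩ : ∃ s, t = 2*s := ⟨t/2, by omega⟩
      rw [show 2*s+2 = 2*(s+1) by ring, hv_even, hv_even] at hvv
      exact hrne s (Sum.inl.inj hvv)
    · obtain ⟨s, rfl⟩ : ∃ s, t = 2*s+1 := ⟨t/2, by omega⟩
      rw [show 2*s+1+2 = 2*(s+1)+1 by ring, hv_odd, hv_odd] at hvv
      exact hcne s (Sum.inr.inj hvv)
  have hP : ∃ q : ℕ, ∃ p, p < q ∧ v p = v q := by
    obtain ⟨x, y, hxy, hv⟩ := Finite.exists_ne_map_eq_of_infinite v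
    rcases Nat.lt_or_ge x y with hlt | hge
    · exact ⟨y, x, hlt, hv⟩
    · exact ⟨x, y, lt_of_le_of_ne hge (Ne.symm hxy), hv.symm⟩
  obtain ⟨p, hpq, hvpq⟩ := Nat.find_spec hP
  set q := Nat.find hP with hq_def
  have hinj : ∀ x, x < q → ∀ y, y < q → v x = v y → x = y := by
    intro x hx y hy hvv
    rcases lt_trichotomy x y with hlt | rfl | hlt
    · exact absurd ⟨x, hlt, hvv⟩ (Nat.find_min hP hy)
    · rfl
    · exact absurd ⟨y, hlt, hvv.symm⟩ (Nat.find_min hP hx)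
  have hpar : p % 2 = q % 2 := by
    rcases Nat.mod_two_eq_zero_or_one p with h1 | h1 <;>
      rcases Nat.mod_two_eq_zero_or_one q with h2 | h2
    · omega
    · exfalso
      have e1 := hv_even (p/2); have e2 := hv_odd (q/2)
      rw [show 2*(p/2) = p by omega] at e1
      rw [show 2*(q/2)+1 = q by omega] at e2
      rw [e1, e2] at hvpq
      simp at hvpq
    · exfalso
      have e1 := hv_odd (p/2); have e2 := hv_even (q/2)
      rw [show 2*(p/2)+1 = p by omega] at e1
      rw [show 2*(q/2) = q by omega] at e2
      rw [e1, e2] at hvpq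
      simp at hvpq
    · omega
  have hq2 : p + 2 ≠ q := by
    intro hh
    exact hnb p (by rw [hh]; exact hvpq.symm)
  obtain ⟨m, hm2, hq⟩ : ∃ m, 2 ≤ m ∧ q = p + 2*m := ⟨(q - p)/2, by omega, by omega⟩
  clear hq_def hq2 hpar hpq
  rcases Nat.mod_two_eq_zero_or_one p with hpe | hpo
  · -- p even
    obtain ⟨s, rfl⟩ : ∃ s, p = 2*s := ⟨p/2, by omega⟩
    have hrs : r s = r (s+m) := by
      have h1 := hv_even s
      have h2 := hv_even (s+m)
      rw [show 2*(s+m) = q by omega] at h2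
      rw [h1, h2] at hvpq
      exact Sum.inl.inj hvpq
    refine hnc ⟨m, hm2, fun k => r (s + k), fun k => c (s + k), ?_, ?_, ?_, ?_⟩
    · intro k1 k2 hkk
      have hk1 := k1.isLt; have hk2 := k2.isLt
      have hkk' : r (s+(k1:ℕ)) = r (s+(k2:ℕ)) := hkk
      have h1 : v (2*(s+(k1:ℕ))) = v (2*(s+(k2:ℕ))) := by
        rw [hv_even, hv_even, hkk']
      have h2 := hinj _ (by omega) _ (by omega) h1
      exact Fin.ext (by omega)
    · intro k1 k2 hkk
      have hk1 := k1.isLt; have hk2 := k2.isLt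
      have hkk' : c (s+(k1:ℕ)) = c (s+(k2:ℕ)) := hkk
      have h1 : v (2*(s+(k1:ℕ))+1) = v (2*(s+(k2:ℕ))+1) := by
        rw [hv_odd, hv_odd, hkk']
      have h2 := hinj _ (by omega) _ (by omega) h1
      exact Fin.ext (by omega)
    · intro i; exact hFrc (s + i)
    · intro i
      have hi := i.isLt
      show (r (s + (((i:ℕ)+1) % m)), c (s + (i:ℕ))) ∈ F
      by_cases hc1 : (i : ℕ) + 1 < m
      · rw [Nat.mod_eq_of_lt hc1]
        exact hmix (s + (i:ℕ))
      · rw [show ((i:ℕ)+1) % m = 0 from by rw [show (i:ℕ)+1 = m by omega]; exact Nat.mod_self m]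
        have hm2' := hmix (s + (i:ℕ))
        rw [show s + (i:ℕ) + 1 = s + m by omega] at hm2'
        show (r s, c (s + (i:ℕ))) ∈ F
        rw [hrs]
        exact hm2'
  · -- p odd
    obtain ⟨s, rfl⟩ : ∃ s, p = 2*s+1 := ⟨p/2, by omega⟩
    have hcs : c s = c (s+m) := by
      have h1 := hv_odd s
      have h2 := hv_odd (s+m)
      rw [show 2*(s+m)+1 = q by omega] at h2
      rw [h1, h2] at hvpq
      exact Sum.inr.inj hvpq
    refine hnc ⟨m, hm2, fun k => r (s+1+k), fun k => c (s+1+k), ?_, ?_, ?_, ?_⟩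
    · intro k1 k2 hkk
      have hk1 := k1.isLt; have hk2 := k2.isLt
      have hkk' : r (s+1+(k1:ℕ)) = r (s+1+(k2:ℕ)) := hkk
      have h1 : v (2*(s+1+(k1:ℕ))) = v (2*(s+1+(k2:ℕ))) := by
        rw [hv_even, hv_even, hkk']
      have h2 := hinj _ (by omega) _ (by omega) h1
      exact Fin.ext (by omega)
    · intro k1 k2 hkk
      have hk1 := k1.isLt; have hk2 := k2.isLt
      have key : ∀ kk : Fin m,
          v (if (kk:ℕ) = m - 1 then 2*s+1 else 2*(s+1+(kk:ℕ))+1) = Sum.inr (c (s+1+(kk:ℕ))) := by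
        intro kk
        by_cases hkm : (kk:ℕ) = m - 1
        · rw [if_pos hkm, hv_odd s, hcs, show s + m = s+1+(kk:ℕ) by omega]
        · rw [if_neg hkm, hv_odd]
      have h1 : v (if (k1:ℕ) = m-1 then 2*s+1 else 2*(s+1+(k1:ℕ))+1)
          = v (if (k2:ℕ) = m-1 then 2*s+1 else 2*(s+1+(k2:ℕ))+1) := by
        have hkk' : c (s+1+(k1:ℕ)) = c (s+1+(k2:ℕ)) := hkk
        rw [key, key, hkk']
      have h2 := hinj _ (by split <;> omega) _ (by split <;> omega) h1
      by_cases hm1 : (k1:ℕ) = m-1 <;> by_cases hmm2 : (k2:ℕ) = m-1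
      · exact Fin.ext (by omega)
      · rw [if_pos hm1, if_neg hmm2] at h2; exact Fin.ext (by omega)
      · rw [if_neg hm1, if_pos hmm2] at h2; exact Fin.ext (by omega)
      · rw [if_neg hm1, if_neg hmm2] at h2; exact Fin.ext (by omega)
    · intro i; exact hFrc (s+1+i)
    · intro i
      have hi := i.isLt
      show (r (s+1 + (((i:ℕ)+1) % m)), c (s+1 + (i:ℕ))) ∈ F
      by_cases hc1 : (i : ℕ) + 1 < m
      · rw [Nat.mod_eq_of_lt hc1]
        exact hmix (s+1+(i:ℕ))
      · rw [show ((i:ℕ)+1) % m = 0 from by rw [show (i:ℕ)+1 = m by omega]; exact Nat.mod_self m]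
        have hm2' := hmix s
        rw [hcs, show s + m = s+1+(i:ℕ) by omega] at hm2'
        show (r (s+1), c (s+1+(i:ℕ))) ∈ F
        exact hm2'

private lemma scale_forest {k : Type*} [Field k] {n h : ℕ}
    (S : Matrix (Fin n) (Fin h) k) :
    ∀ (N : ℕ) (F : Set (Fin n × Fin h)), F.ncard = N → (∀ p ∈ F, S p.1 p.2 ≠ 0) →
    (¬ ∃ (m : ℕ) (_ : 2 ≤ m) (a : Fin m → Fin n) (b : Fin m → Fin h),
      Function.Injective a ∧ Function.Injective b ∧
      (∀ i, (a i, b i) ∈ F) ∧ (∀ i, (a (cycSucc i), b i) ∈ F)) →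
    ∃ (dr : Fin n → kˣ) (dc : Fin h → kˣ),
      ∀ p ∈ F, (dr p.1 : k) * S p.1 p.2 * (dc p.2 : k) = 1 := by
  intro N
  induction N using Nat.strong_induction_on with
  | _ N ih =>
    intro F hcard hnz hnc
    rcases Set.eq_empty_or_nonempty F with rfl | hne
    · exact ⟨fun _ => 1, fun _ => 1, fun p hp => absurd hp (Set.notMem_empty p)⟩
    obtain ⟨p0, hp0, hleaf⟩ := exists_leaf_edge F hne hnc
    set F' := F \ {p0} with hF'
    have hsub : F' ⊆ F := Set.diff_subset
    have hcard' : F'.ncard < N := by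
      rw [← hcard]
      exact Set.ncard_diff_singleton_lt_of_mem hp0 (Set.toFinite F)
    obtain ⟨dr, dc, hdd⟩ := ih F'.ncard hcard' F' rfl (fun p hp => hnz p (hsub hp))
      (by
        rintro ⟨m, hm, a, b, ha, hb, h1, h2⟩
        exact hnc ⟨m, hm, a, b, ha, hb, fun i => hsub (h1 i), fun i => hsub (h2 i)⟩)
    have hSn : S p0.1 p0.2 ≠ 0 := hnz p0 hp0
    rcases hleaf with hrow | hcol
    · refine ⟨Function.update dr p0.1 ((Units.mk0 (S p0.1 p0.2) hSn) * (dc p0.2))⁻¹, dc, ?_⟩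
      intro p hp
      by_cases hpe : p = p0
      · subst hpe
        rw [Function.update_self]
        have : (((Units.mk0 (S p.1 p.2) hSn) * (dc p.2))⁻¹ : kˣ) * ((Units.mk0 (S p.1 p.2) hSn) * (dc p.2)) = 1 :=
          inv_mul_cancel _
        calc ((((Units.mk0 (S p.1 p.2) hSn) * (dc p.2))⁻¹ : kˣ) : k) * S p.1 p.2 * (dc p.2 : k)
            = ((((Units.mk0 (S p.1 p.2) hSn) * (dc p.2))⁻¹ : kˣ) : k)
              * (((Units.mk0 (S p.1 p.2) hSn) * (dc p.2) : kˣ) : k) := by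
              push_cast [Units.val_mk0]; ring
          _ = 1 := by rw [← Units.val_mul, this, Units.val_one]
      · have hp' : p ∈ F' := ⟨hp, hpe⟩
        have hne1 : p.1 ≠ p0.1 := by
          intro hh
          apply hpe
          have := hrow p.2 (by rw [← hh]; exact (by simpa using hp))
          exact Prod.ext hh this
        rw [Function.update_of_ne hne1]
        exact hdd p hp'
    · refine ⟨dr, Function.update dc p0.2 ((dr p0.1) * (Units.mk0 (S p0.1 p0.2) hSn))⁻¹, ?_⟩
      intro p hp
      by_cases hpe : p = p0
      · subst hpe
        rw [Function.update_self]
        have : ((dr p.1) * (Units.mk0 (S p.1 p.2) hSn)) * (((dr p.1) * (Units.mk0 (S p.1 p.2) hSn))⁻¹ : kˣ) = 1 :=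
          mul_inv_cancel _
        calc (dr p.1 : k) * S p.1 p.2 * ((((dr p.1) * (Units.mk0 (S p.1 p.2) hSn))⁻¹ : kˣ) : k)
            = (((dr p.1) * (Units.mk0 (S p.1 p.2) hSn) : kˣ) : k)
              * ((((dr p.1) * (Units.mk0 (S p.1 p.2) hSn))⁻¹ : kˣ) : k) := by
              push_cast [Units.val_mk0]; ring
          _ = 1 := by rw [← Units.val_mul, this, Units.val_one]
      · have hp' : p ∈ F' := ⟨hp, hpe⟩
        have hne2 : p.2 ≠ p0.2 := by
          intro hh
          apply hpe
          have := hcol p.1 (by rw [← hh]; exact (by simpa using hp))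
          exact Prod.ext this hh
        rw [Function.update_of_ne hne2]
        exact hdd p hp'

/-- the rows and columns of a matrix with slack support can be scaled so that
all entries indexed by an acyclic set (spanning forest) equal `1`. -/
theorem stmt17 {k : Type*} [Field k] {n d h : ℕ} (M : Matroid (Fin n))
    (hE : M.E = Set.univ) (hrk : HasRank M (d + 1))
    (H : Fin h → Set (Fin n)) (hH : HypEnum M d H)
    (S : Matrix (Fin n) (Fin h) k) (hS : ∀ i j, S i j = 0 ↔ i ∈ H j)
    (F : Set (Fin n × Fin h)) (hF : ∀ p ∈ F, p.1 ∉ H p.2)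
    (hacyc : ¬ ∃ (m : ℕ) (_ : 2 ≤ m) (a : Fin m → Fin n) (b : Fin m → Fin h),
      Function.Injective a ∧ Function.Injective b ∧
      (∀ i, a i ∉ H (b i)) ∧ (∀ i, a (cycSucc i) ∉ H (b i)) ∧
      (∀ i, (a i, b i) ∈ F) ∧ (∀ i, (a (cycSucc i), b i) ∈ F)) :
    ∃ (dr : Fin n → kˣ) (dc : Fin h → kˣ),
      ∀ p ∈ F, (dr p.1 : k) * S p.1 p.2 * (dc p.2 : k) = 1 := by
  have hnz : ∀ p ∈ F, S p.1 p.2 ≠ 0 := fun p hp h0 => hF p hp ((hS p.1 p.2).1 h0)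
  refine scale_forest S F.ncard F rfl hnz ?_
  rintro ⟨m, hm, a, b, ha, hb, h1, h2⟩
  exact hacyc ⟨m, hm, a, b, ha, hb, fun i => hF _ (h1 i), fun i => hF _ (h2 i), h1, h2⟩
end
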